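/- Assume the non-duplicated-negation condition. Let X be any type whose elements represent trajectories ξ = (x, u) of the shared dynamical system, let D ⊆ X × (Fin n → [0,1]) be any set encoding the shared system-dynamics and atomic-predicate constraints, and let J : X × (Fin n → [0,1]) → ℝ be any objective function (for instance J(x,u,z) = xᵀQx + uᵀRu + Θᵀz). Then the set of objective values attained on the LNF-relax feasible set {(ξ, z) : (ξ, z) ∈ D and there exist y(l,m) ∈ [0,1] satisfying the LNF-relax logic constraints with z} is contained in the set of objective values attained on the LT-relax feasible set {(ξ, z) : (ξ, z) ∈ D and there exist zφ_l, zφ(l,m) ∈ [0,1] satisfying the LT-relax logic constraints with z}. Consequently, if the LNF-relax problem is feasible then the LT-relax problem is feasible, and the infimum of J over the LT-relax feasible set (in the extended reals) is at most the infimum of J over the LNF-relax feasible set. -/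

import Mathlib

open Finset

/-- The LNF-relax logic constraints for a conjunctive–disjunctive specification
`φ = ⋀_l ⋁_m ⋀ literals`, encoded by positive/negated atom sets
`Pos l m, Neg l m ⊆ Fin n`. -/
def LNFRelaxConstraints {n L : ℕ} {M : Fin L → ℕ}
    (Pos Neg : (l : Fin L) → Fin (M l) → Finset (Fin n))
    (y : (l : Fin L) → Fin (M l) → ℝ) (z : Fin n → ℝ) : Prop :=
  (∀ l, ∑ m, y l m = 1) ∧
  (∀ (l : Fin L) (j : Fin n),
      (∑ m ∈ univ.filter (fun m => j ∈ Pos l m), y l m) ≤ z j) ∧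
  (∀ (l : Fin L) (j : Fin n), (∃ m, j ∈ Neg l m) →
      z j ≤ ∑ m ∈ univ.filter (fun m => j ∈ Neg l m), (1 - y l m)) ∧
  (∀ (l : Fin L) (m : Fin (M l)),
      1 - (((Pos l m).card : ℝ) + ((Neg l m).card : ℝ))
        + ∑ j ∈ Pos l m, z j + ∑ j ∈ Neg l m, (1 - z j) ≤ y l m)

/-- The LT-relax logic constraints for the same specification. -/
def LTRelaxConstraints {n L : ℕ} {M : Fin L → ℕ}
    (Pos Neg : (l : Fin L) → Fin (M l) → Finset (Fin n))
    (zphiL : Fin L → ℝ) (zphi : (l : Fin L) → Fin (M l) → ℝ)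
    (z : Fin n → ℝ) : Prop :=
  (∀ l, zphiL l = 1) ∧
  (∀ (l : Fin L) (m : Fin (M l)), zphi l m ≤ zphiL l) ∧
  (∀ l, zphiL l ≤ ∑ m, zphi l m) ∧
  (∀ (l : Fin L) (m : Fin (M l)),
      1 - (((Pos l m).card : ℝ) + ((Neg l m).card : ℝ))
        + ∑ j ∈ Pos l m, z j + ∑ j ∈ Neg l m, (1 - z j) ≤ zphi l m) ∧
  (∀ (l : Fin L) (m : Fin (M l)) (j : Fin n), j ∈ Pos l m → zphi l m ≤ z j) ∧
  (∀ (l : Fin L) (m : Fin (M l)) (j : Fin n), j ∈ Neg l m → z j ≤ 1 - zphi l m)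

/-- (Tighter convex relaxation.) For a shared dynamics/predicate
set `D` and objective `J` independent of the logic variables, the objective
values attained on the LNF-relax feasible set are contained in those attained
on the LT-relax feasible set; hence feasibility of LNF-relax implies
feasibility of LT-relax and the LT-relax infimum (in the extended reals) is at
most the LNF-relax infimum. -/
theorem ltRelax_infimum_le_lnfRelax_infimum (n L : ℕ) (hn : 1 ≤ n) (hL : 1 ≤ L)
    (M : Fin L → ℕ) (hM : ∀ l, 1 ≤ M l)
    (Pos Neg : (l : Fin L) → Fin (M l) → Finset (Fin n))
    (hdisj : ∀ (l : Fin L) (m : Fin (M l)), Disjoint (Pos l m) (Neg l m))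
    (hnodup : ∀ (l : Fin L) (j : Fin n) (m m' : Fin (M l)),
      j ∈ Neg l m → j ∈ Neg l m' → m = m')
    (X : Type*) (D : Set (X × (Fin n → ℝ)))
    (hDdom : ∀ p ∈ D, ∀ j, p.2 j ∈ Set.Icc (0 : ℝ) 1)
    (J : X × (Fin n → ℝ) → ℝ) :
    (J '' {p : X × (Fin n → ℝ) | p ∈ D ∧ (∀ j, p.2 j ∈ Set.Icc (0 : ℝ) 1) ∧
        ∃ y : (l : Fin L) → Fin (M l) → ℝ,
          (∀ l m, y l m ∈ Set.Icc (0 : ℝ) 1) ∧ LNFRelaxConstraints Pos Neg y p.2}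
      ⊆ J '' {p : X × (Fin n → ℝ) | p ∈ D ∧ (∀ j, p.2 j ∈ Set.Icc (0 : ℝ) 1) ∧
        ∃ (zphiL : Fin L → ℝ) (zphi : (l : Fin L) → Fin (M l) → ℝ),
          (∀ l, zphiL l ∈ Set.Icc (0 : ℝ) 1) ∧
          (∀ l m, zphi l m ∈ Set.Icc (0 : ℝ) 1) ∧
          LTRelaxConstraints Pos Neg zphiL zphi p.2}) ∧
    ({p : X × (Fin n → ℝ) | p ∈ D ∧ (∀ j, p.2 j ∈ Set.Icc (0 : ℝ) 1) ∧
        ∃ y : (l : Fin L) → Fin (M l) → ℝ,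
          (∀ l m, y l m ∈ Set.Icc (0 : ℝ) 1) ∧
          LNFRelaxConstraints Pos Neg y p.2}.Nonempty →
      {p : X × (Fin n → ℝ) | p ∈ D ∧ (∀ j, p.2 j ∈ Set.Icc (0 : ℝ) 1) ∧
        ∃ (zphiL : Fin L → ℝ) (zphi : (l : Fin L) → Fin (M l) → ℝ),
          (∀ l, zphiL l ∈ Set.Icc (0 : ℝ) 1) ∧
          (∀ l m, zphi l m ∈ Set.Icc (0 : ℝ) 1) ∧
          LTRelaxConstraints Pos Neg zphiL zphi p.2}.Nonempty) ∧
    sInf ((fun p => (J p : EReal)) ''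
        {p : X × (Fin n → ℝ) | p ∈ D ∧ (∀ j, p.2 j ∈ Set.Icc (0 : ℝ) 1) ∧
          ∃ (zphiL : Fin L → ℝ) (zphi : (l : Fin L) → Fin (M l) → ℝ),
            (∀ l, zphiL l ∈ Set.Icc (0 : ℝ) 1) ∧
            (∀ l m, zphi l m ∈ Set.Icc (0 : ℝ) 1) ∧
            LTRelaxConstraints Pos Neg zphiL zphi p.2})
      ≤ sInf ((fun p => (J p : EReal)) ''
        {p : X × (Fin n → ℝ) | p ∈ D ∧ (∀ j, p.2 j ∈ Set.Icc (0 : ℝ) 1) ∧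
          ∃ y : (l : Fin L) → Fin (M l) → ℝ,
            (∀ l m, y l m ∈ Set.Icc (0 : ℝ) 1) ∧
            LNFRelaxConstraints Pos Neg y p.2}) := by
  have hsub : {p : X × (Fin n → ℝ) | p ∈ D ∧ (∀ j, p.2 j ∈ Set.Icc (0 : ℝ) 1) ∧
        ∃ y : (l : Fin L) → Fin (M l) → ℝ,
          (∀ l m, y l m ∈ Set.Icc (0 : ℝ) 1) ∧ LNFRelaxConstraints Pos Neg y p.2}
      ⊆ {p : X × (Fin n → ℝ) | p ∈ D ∧ (∀ j, p.2 j ∈ Set.Icc (0 : ℝ) 1) ∧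
        ∃ (zphiL : Fin L → ℝ) (zphi : (l : Fin L) → Fin (M l) → ℝ),
          (∀ l, zphiL l ∈ Set.Icc (0 : ℝ) 1) ∧
          (∀ l m, zphi l m ∈ Set.Icc (0 : ℝ) 1) ∧
          LTRelaxConstraints Pos Neg zphiL zphi p.2} := by
    rintro ⟨x, z⟩ ⟨hD, hz, y, hy01, h1, h2, h3, h4⟩
    refine ⟨hD, hz, fun _ => 1, y, fun l => ⟨zero_le_one, le_refl 1⟩, hy01,
      fun l => rfl, fun l m => (hy01 l m).2, fun l => (h1 l).ge, h4, ?_, ?_⟩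
    · intro l m j hj
      calc y l m ≤ ∑ m' ∈ univ.filter (fun m' => j ∈ Pos l m'), y l m' :=
            Finset.single_le_sum (fun m' _ => (hy01 l m').1) (by simp [hj])
        _ ≤ z j := h2 l j
    · intro l m j hj
      have hfil : univ.filter (fun m' => j ∈ Neg l m') = {m} := by
        ext m'
        simp only [Finset.mem_filter, Finset.mem_univ, true_and,
          Finset.mem_singleton]
        exact ⟨fun h => hnodup l j m' m h hj, fun h => h ▸ hj⟩
      have := h3 l j ⟨m, hj⟩
      rwa [hfil, Finset.sum_singleton] at this
  exact ⟨Set.image_mono hsub, fun ⟨p, hp⟩ => ⟨p, hsub hp⟩,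
    sInf_le_sInf (Set.image_mono hsub)⟩
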